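/- Suppose λ is an infinite cardinal, B is a complete Boolean algebra with the λ-chain condition (every antichain of B has cardinality less than λ), and U is an ℵ₁-incomplete ultrafilter on B. Then U is not λ-OK; that is, there exists a decreasing sequence (a_n : n < ω) of elements of U with a_0 = ⊤ such that there is no multiplicative distribution (b_s : s a finite subset of λ) with every b_s ∈ U and b_s ≤ a_{|s|}. -/

import Mathlib

open Cardinal

universe u

/-- `U` is an ultrafilter on the Boolean algebra `B`: `⊥ ∉ U`, upward closed, closed under
binary meets, and for every `a` either `a ∈ U` or `aᶜ ∈ U`. -/
def IsUltrafilterOn {B : Type*} [BooleanAlgebra B] (U : Set B) : Prop :=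
  ⊥ ∉ U ∧ (∀ a ∈ U, ∀ b : B, a ≤ b → b ∈ U) ∧ (∀ a ∈ U, ∀ b ∈ U, a ⊓ b ∈ U) ∧
    ∀ a : B, a ∈ U ∨ aᶜ ∈ U

/-- `b` is a multiplicative distribution on `B` indexed by finite subsets of `Λ`:
all values nonzero, `b ∅ = ⊤`, antitone with respect to inclusion, and multiplicative. -/
def IsMultDistribution {B : Type*} [BooleanAlgebra B] {Λ : Type*} (b : Finset Λ → B) : Prop :=
  (∀ s : Finset Λ, b s ≠ ⊥) ∧ b ∅ = ⊤ ∧ (∀ s t : Finset Λ, s ⊆ t → b t ≤ b s) ∧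
    ∀ s : Finset Λ, b s = s.inf fun α => b {α}

/-- There is a multiplicative distribution indexed by finite subsets of `Λ`, lying in `U`,
refining the sequence `a` in the sense that `b s ≤ a |s|`. -/
def HasMultRefinement {B : Type*} [BooleanAlgebra B] (Λ : Type*) (U : Set B) (a : ℕ → B) : Prop :=
  ∃ b : Finset Λ → B, IsMultDistribution b ∧ (∀ s : Finset Λ, b s ∈ U) ∧
    ∀ s : Finset Λ, b s ≤ a s.card

/-- An antichain in a Boolean algebra: a set of pairwise disjoint nonzero elements. -/
def IsBAAntichain {B : Type*} [BooleanAlgebra B] (A : Set B) : Prop :=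
  ⊥ ∉ A ∧ A.Pairwise fun c d => c ⊓ d = ⊥

/-- if `B` is a complete Boolean algebra with the `λ`-c.c. and `U` is an
`ℵ₁`-incomplete ultrafilter on `B`, then `U` is not `λ`-OK: there is a decreasing sequence
`(a_n)` from `U` with `a 0 = ⊤` admitting no multiplicative refinement in `U` indexed by
the finite subsets of `λ`. -/

lemma mk_finset_biUnion_lt {α : Type u} {κ : Cardinal.{u}} (hκ : ℵ₀ ≤ κ) (s : Finset ℕ)
    (f : ℕ → Set α) (h : ∀ j ∈ s, #(f j) < κ) : #(⋃ j ∈ s, f j) < κ := by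
  classical
  induction s using Finset.induction_on with
  | empty => simpa using lt_of_lt_of_le aleph0_pos hκ
  | insert _ _ ha ih =>
    rename_i a s
    rw [Finset.set_biUnion_insert]
    refine lt_of_le_of_lt (Cardinal.mk_union_le _ _) (Cardinal.add_lt_of_lt hκ ?_ ?_)
    · exact h a (Finset.mem_insert_self _ _)
    · exact ih (fun j hj => h j (Finset.mem_insert_of_mem hj))

lemma antichain_of_bounded_meets {B : Type u} [BooleanAlgebra B] {Λ : Type u}
    (x : Λ → B) (S : Set Λ) (hS : ℵ₀ ≤ #S) {k : ℕ} (hk : 1 ≤ k)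
    (hne : ∀ α ∈ S, x α ≠ ⊥)
    (hbot : ∀ s : Finset Λ, k ≤ s.card → s.inf x = ⊥) :
    ∃ A : Set B, ⊥ ∉ A ∧ (A.Pairwise fun c d => c ⊓ d = ⊥) ∧
      (∀ y ∈ A, ∃ s : Finset Λ, s.Nonempty ∧ ↑s ⊆ S ∧ y = s.inf x) ∧ #S ≤ #A := by
  classical
  set κ := #S with hκdef
  have hκpos : (0 : Cardinal) < κ := lt_of_lt_of_le aleph0_pos hS
  set F : ℕ → Set (Finset Λ) :=
    fun j => {s : Finset Λ | ↑s ⊆ S ∧ s.card = j ∧ s.inf x ≠ ⊥} with hF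
  set P : ℕ → Prop := fun j => κ ≤ #(F j) with hP
  have hF1 : P 1 := by
    have hmem : ∀ a : S, ({a.1} : Finset Λ) ∈ F 1 := by
      intro a
      refine ⟨by simpa using a.2, by simp, by simpa using hne a.1 a.2⟩
    refine Cardinal.mk_le_of_injective (f := fun a : S => (⟨{a.1}, hmem a⟩ : F 1)) ?_
    intro a b hab
    apply Subtype.ext
    have := congrArg (fun z => z.1) hab
    exact Finset.singleton_injective this
  have hFk : ∀ j, k ≤ j → F j = ∅ := by
    intro j hj
    ext s
    simp only [hF, Set.mem_setOf_eq, Set.mem_empty_iff_false, iff_false, not_and]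
    intro _ hcard
    simp [hbot s (hcard ▸ hj)]
  have hPk : ¬ P k := by
    rw [hP]
    simp only [hFk k le_rfl]
    simpa using hκpos.ne'
  set m := Nat.findGreatest P k with hm
  have hm1 : 1 ≤ m := Nat.le_findGreatest hk hF1
  have hPm : P m := Nat.findGreatest_spec hk hF1
  have hgt : ∀ j, m < j → #(F j) < κ := by
    intro j hj
    by_cases hjk : j ≤ k
    · exact not_le.mp (Nat.findGreatest_is_greatest hj hjk)
    · rw [hFk j (le_of_not_ge hjk)]
      simpa using hκpos
  -- the set of "touched" elements of F m
  set T : Set (Finset Λ) :=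
    {s | s ∈ F m ∧ ∃ t ∈ F m, t ≠ s ∧ (s.inf x) ⊓ (t.inf x) ≠ ⊥} with hT
  set V : Set (Finset Λ) := ⋃ j ∈ Finset.Ioc m (2 * m), F j with hV
  have hVκ : #V < κ :=
    mk_finset_biUnion_lt hS _ _ (fun j hj => hgt j (Finset.mem_Ioc.mp hj).1)
  have hTV : T ⊆ ⋃ u ∈ V, (↑u.powerset : Set (Finset Λ)) := by
    rintro s ⟨hsF, t, htF, hts, hmeet⟩
    have hsm : s.card = m := hsF.2.1
    have htm : t.card = m := htF.2.1
    have hcard : (s ∪ t).card ≤ 2 * m :=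
      le_trans (Finset.card_union_le s t) (by omega)
    have hmemU : s ∪ t ∈ F ((s ∪ t).card) := by
      refine ⟨?_, rfl, ?_⟩
      · rw [Finset.coe_union]
        exact Set.union_subset hsF.1 htF.1
      · rw [Finset.inf_union]
        exact hmeet
    have hlt : m < (s ∪ t).card := by
      by_contra h
      push_neg at h
      have hsu : s = s ∪ t :=
        Finset.eq_of_subset_of_card_le Finset.subset_union_left (by omega)
      have ht' : t ⊆ s := hsu ▸ Finset.subset_union_right
      exact hts (Finset.eq_of_subset_of_card_le ht' (by omega))
    have huV : s ∪ t ∈ V := by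
      rw [hV]
      exact Set.mem_biUnion (Finset.mem_Ioc.mpr ⟨hlt, hcard⟩) hmemU
    exact Set.mem_biUnion huV (Finset.mem_coe.mpr (Finset.mem_powerset.mpr Finset.subset_union_left))
  have hTκ : #T < κ := by
    rcases eq_or_lt_of_le hS with hSeq | hSlt
    · -- κ = ℵ₀ : everything is finite
      have hVfin : V.Finite := lt_aleph0_iff_set_finite.mp (hSeq ▸ hVκ)
      have hTfin : T.Finite :=
        Set.Finite.subset (Set.Finite.biUnion hVfin (fun u _ => u.powerset.finite_toSet)) hTV
      exact hSeq ▸ hTfin.lt_aleph0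
    · have h1 : #T ≤ #V * ⨆ u : V, #(↑(u.1.powerset) : Set (Finset Λ)) :=
        le_trans (Cardinal.mk_le_mk_of_subset hTV) (Cardinal.mk_biUnion_le _ _)
      have h2 : (⨆ u : V, #(↑(u.1.powerset) : Set (Finset Λ))) ≤ ℵ₀ :=
        ciSup_le' (fun u => le_of_lt (u.1.powerset.finite_toSet.lt_aleph0))
      calc #T ≤ #V * ℵ₀ := le_trans h1 (mul_le_mul_right h2 _)
        _ < κ := Cardinal.mul_lt_of_lt hS hVκ hSlt
  have hWκ : κ ≤ #(F m \ T : Set (Finset Λ)) := by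
    by_contra h
    push_neg at h
    have hsub : F m ⊆ (F m \ T) ∪ T := by
      intro s hs
      by_cases hsT : s ∈ T
      · exact Or.inr hsT
      · exact Or.inl ⟨hs, hsT⟩
    have : #(F m) < κ :=
      lt_of_le_of_lt (le_trans (Cardinal.mk_le_mk_of_subset hsub) (Cardinal.mk_union_le _ _))
        (Cardinal.add_lt_of_lt hS h hTκ)
    exact absurd hPm (not_le.mpr this)
  refine ⟨(fun s : Finset Λ => s.inf x) '' (F m \ T), ?_, ?_, ?_, ?_⟩
  · rintro ⟨s, hs, hbot'⟩
    exact hs.1.2.2 hbot'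
  · rintro y ⟨s, hs, rfl⟩ z ⟨t, ht, rfl⟩ hyz
    have hst : t ≠ s := fun h => hyz (by rw [h])
    by_contra hmeet
    exact hs.2 ⟨hs.1, t, ht.1, hst, hmeet⟩
  · rintro y ⟨s, hs, rfl⟩
    refine ⟨s, Finset.card_pos.mp (by have := hs.1.2.1; omega), hs.1.1, rfl⟩
  · rw [Cardinal.mk_image_eq_of_injOn]
    · exact le_trans hWκ le_rfl
    · intro s hs t ht hst
      by_contra hne'
      have hst2 : s.inf x = t.inf x := hst
      have hmeet : s.inf x ⊓ t.inf x ≠ ⊥ := by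
        rw [hst2, inf_idem]
        exact ht.1.2.2
      exact hs.2 ⟨hs.1, t, ht.1, fun h => hne' h.symm, hmeet⟩

theorem stmt0 {B : Type u} [CompleteBooleanAlgebra B] (lam : Cardinal.{u}) (hlam : ℵ₀ ≤ lam)
    (hcc : ∀ A : Set B, IsBAAntichain A → #A < lam)
    (U : Set B) (hU : IsUltrafilterOn U)
    (hinc : ∃ a : ℕ → B, (∀ n, a n ∈ U) ∧ Antitone a ∧ (⨅ n, a n) = ⊥) :
    ∃ a : ℕ → B, (∀ n, a n ∈ U) ∧ Antitone a ∧ a 0 = ⊤ ∧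
      ¬ HasMultRefinement lam.ord.ToType U a := by
  classical
  obtain ⟨a0, ha0U, ha0anti, ha0inf⟩ := hinc
  set a : ℕ → B := fun n => Nat.rec ⊤ (fun n _ => a0 n) n with ha
  have haU : ∀ n, a n ∈ U := by
    intro n
    cases n with
    | zero =>
      rcases hU.2.2.2 ⊤ with h | h
      · exact h
      · rw [compl_top] at h
        exact absurd h hU.1
    | succ n => exact ha0U n
  have hanti : Antitone a := by
    apply antitone_nat_of_succ_le
    intro n
    cases n with
    | zero => exact le_top
    | succ n => exact ha0anti (Nat.le_succ n)
  have hainf : (⨅ n, a n) = ⊥ := by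
    apply le_bot_iff.mp
    rw [← ha0inf]
    exact le_iInf fun n => iInf_le_of_le (n + 1) le_rfl
  set Λ := lam.ord.ToType with hΛdef
  have hΛ : #Λ = lam := Cardinal.mk_ord_toType lam
  refine ⟨a, haU, hanti, rfl, ?_⟩
  rintro ⟨b, ⟨hbne, hbe, hbmono, hbmul⟩, hbU, hble⟩
  set c : ℕ → B := fun n => a n ⊓ (a (n + 1))ᶜ with hc
  have hcdisj : ∀ m n : ℕ, m ≠ n → c m ⊓ c n = ⊥ := by
    have key : ∀ m n, m < n → c m ⊓ c n = ⊥ := by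
      intro m n hmn
      apply le_bot_iff.mp
      calc c m ⊓ c n ≤ (a (m + 1))ᶜ ⊓ a (m + 1) :=
            inf_le_inf inf_le_right (le_trans inf_le_left (hanti hmn))
        _ = ⊥ := compl_inf_eq_bot
    intro m n h
    rcases h.lt_or_gt with h' | h'
    · exact key m n h'
    · rw [inf_comm]
      exact key n m h'
  have hsupc : (⨆ n, c n) = ⊤ := by
    have h1 : (⨆ n, (a n)ᶜ) = ⊤ := by
      rw [← compl_iInf, hainf, compl_bot]
    have h2 : ∀ n, (a n)ᶜ ≤ ⨆ k, c k := by
      intro n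
      induction n with
      | zero =>
        rw [show a 0 = ⊤ from rfl, compl_top]
        exact bot_le
      | succ n ih =>
        have h3 : (a (n + 1))ᶜ ≤ c n ⊔ (a n)ᶜ := by
          calc (a (n + 1))ᶜ = (a (n + 1))ᶜ ⊓ (a n ⊔ (a n)ᶜ) := by
                rw [sup_compl_eq_top, inf_top_eq]
            _ = ((a (n + 1))ᶜ ⊓ a n) ⊔ ((a (n + 1))ᶜ ⊓ (a n)ᶜ) := inf_sup_left _ _ _
            _ ≤ (a n ⊓ (a (n + 1))ᶜ) ⊔ (a n)ᶜ :=
              sup_le_sup (le_of_eq (inf_comm _ _)) inf_le_right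
        exact le_trans h3 (sup_le (le_iSup c n) ih)
    exact le_antisymm le_top (h1 ▸ iSup_le h2)
  set x : ℕ → Λ → B := fun n α => b {α} ⊓ c n with hx
  set S : ℕ → Set Λ := fun n => {α | x n α ≠ ⊥} with hS
  have hcover : ∀ α : Λ, ∃ n, α ∈ S n := by
    intro α
    by_contra h
    push_neg at h
    have hzero : ∀ n, x n α = ⊥ := by
      intro n
      by_contra h'
      exact h n h'
    have : b {α} = ⊥ := by
      have hb : b {α} = b {α} ⊓ ⨆ n, c n := by rw [hsupc, inf_top_eq]
      rw [inf_iSup_eq] at hb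
      rw [hb]
      apply le_bot_iff.mp
      exact iSup_le fun n => le_of_eq (hzero n)
    exact hbne _ this
  have hkey : ∀ n (s : Finset Λ), n + 2 ≤ s.card → s.inf (x n) = ⊥ := by
    intro n s hcard
    obtain ⟨α, hα⟩ : s.Nonempty := Finset.card_pos.mp (by omega)
    apply le_bot_iff.mp
    have h1 : s.inf (x n) ≤ b s := by
      rw [hbmul s]
      exact Finset.inf_mono_fun (fun β _ => inf_le_left)
    have h2 : s.inf (x n) ≤ c n := le_trans (Finset.inf_le hα) inf_le_right
    have h3 : b s ≤ a (n + 2) := le_trans (hble s) (hanti hcard)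
    have h4 : c n ≤ (a (n + 2))ᶜ :=
      le_trans inf_le_right (compl_le_compl (hanti (by omega : n + 1 ≤ n + 2)))
    calc s.inf (x n) ≤ a (n + 2) ⊓ (a (n + 2))ᶜ := le_inf (h1.trans h3) (h2.trans h4)
      _ = ⊥ := inf_compl_eq_bot
  rcases lt_or_eq_of_le hlam with hlt | heq
  · -- ℵ₀ < lam
    have hA : ∀ n, ∃ A : Set B, ⊥ ∉ A ∧ (A.Pairwise fun c d => c ⊓ d = ⊥) ∧
        (∀ y ∈ A, y ≤ c n) ∧ (ℵ₀ ≤ #(S n) → #(S n) ≤ #A) := by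
      intro n
      by_cases h : ℵ₀ ≤ #(S n)
      · obtain ⟨A, h1, h2, h3, h4⟩ :=
          antichain_of_bounded_meets (x n) (S n) h (k := n + 2) (by omega)
            (fun α hα => hα) (hkey n)
        refine ⟨A, h1, h2, ?_, fun _ => h4⟩
        intro y hy
        obtain ⟨s, hsne, hsS, rfl⟩ := h3 y hy
        obtain ⟨α, hα⟩ := hsne
        exact le_trans (Finset.inf_le hα) inf_le_right
      · exact ⟨∅, by simp, Set.pairwise_empty _, by simp, fun h' => absurd h' h⟩
    choose A hA1 hA2 hA3 hA4 using hA
    set W : Set B := ⋃ n, A n with hW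
    have hWanti : IsBAAntichain W := by
      constructor
      · intro hyp
        obtain ⟨n, hn⟩ := Set.mem_iUnion.mp hyp
        exact hA1 n hn
      · rintro y hy z hz hyz
        obtain ⟨n, hn⟩ := Set.mem_iUnion.mp hy
        obtain ⟨n', hn'⟩ := Set.mem_iUnion.mp hz
        by_cases h : n = n'
        · subst h
          exact hA2 n hn hn' hyz
        · exact le_bot_iff.mp
            (le_trans (inf_le_inf (hA3 n _ hn) (hA3 n' _ hn')) (le_of_eq (hcdisj n n' h)))
    have hWlt := hcc W hWanti
    have hcontra : lam ≤ max ℵ₀ #W := by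
      have huniv : (⋃ n : ULift.{u} ℕ, S n.down) = Set.univ :=
        Set.eq_univ_of_forall (fun α => by
          obtain ⟨n, hn⟩ := hcover α
          exact Set.mem_iUnion.mpr ⟨ULift.up n, hn⟩)
      have h1 : lam ≤ #(ULift.{u} ℕ) * ⨆ n : ULift.{u} ℕ, #(S n.down) := by
        calc lam = #Λ := hΛ.symm
          _ = #(⋃ n : ULift.{u} ℕ, S n.down) := by rw [huniv, Cardinal.mk_univ]
          _ ≤ #(ULift.{u} ℕ) * ⨆ n : ULift.{u} ℕ, #(S n.down) := Cardinal.mk_iUnion_le _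
      have hulift : #(ULift.{u} ℕ) = ℵ₀ := by simp
      have h2 : (⨆ n : ULift.{u} ℕ, #(S n.down)) ≤ max ℵ₀ #W := by
        apply ciSup_le'
        intro n
        by_cases h : ℵ₀ ≤ #(S n.down)
        · exact le_trans (le_trans (hA4 n.down h)
            (Cardinal.mk_le_mk_of_subset (Set.subset_iUnion A n.down))) (le_max_right _ _)
        · exact le_trans (le_of_lt (not_le.mp h)) (le_max_left _ _)
      calc lam ≤ #(ULift.{u} ℕ) * ⨆ n : ULift.{u} ℕ, #(S n.down) := h1
        _ = ℵ₀ * ⨆ n : ULift.{u} ℕ, #(S n.down) := by rw [hulift]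
        _ ≤ ℵ₀ * max ℵ₀ #W := mul_le_mul_right h2 _
        _ = max ℵ₀ (max ℵ₀ #W) := Cardinal.mul_eq_max le_rfl (le_max_left _ _)
        _ = max ℵ₀ #W := by rw [← max_assoc, max_self]
    exact absurd hcontra (not_le.mpr (max_lt hlt hWlt))
  · -- lam = ℵ₀
    by_cases hex : ∃ n, ℵ₀ ≤ #(S n)
    · obtain ⟨n, hn⟩ := hex
      obtain ⟨A, h1, h2, h3, h4⟩ :=
        antichain_of_bounded_meets (x n) (S n) hn (k := n + 2) (by omega)
          (fun α hα => hα) (hkey n)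
      have hlt := hcc A ⟨h1, h2⟩
      rw [← heq] at hlt
      exact absurd (hn.trans h4) (not_le.mpr hlt)
    · push_neg at hex
      have hfin : ∀ n, (S n).Finite := fun n => lt_aleph0_iff_set_finite.mp (hex n)
      set N : Set ℕ := {n | (S n).Nonempty} with hN
      have hNinf : N.Infinite := by
        intro hNfin
        have huniv : (Set.univ : Set Λ) ⊆ ⋃ n ∈ N, S n := by
          intro α _
          obtain ⟨n, hn⟩ := hcover α
          exact Set.mem_biUnion (show n ∈ N from ⟨α, hn⟩) hn
        have hufin : (Set.univ : Set Λ).Finite :=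
          Set.Finite.subset (Set.Finite.biUnion hNfin (fun n _ => hfin n)) huniv
        have : #Λ < ℵ₀ := by
          rw [← Cardinal.mk_univ]
          exact hufin.lt_aleph0
        rw [hΛ, ← heq] at this
        exact lt_irrefl _ this
      have hchoice : ∀ n : N, ∃ α, α ∈ S n.1 := fun n => n.2
      choose g hg using hchoice
      set f : N → B := fun n => x n.1 (g n) with hf
      have hfne : ∀ n, f n ≠ ⊥ := fun n => hg n
      have hfdisj : ∀ n n' : N, n ≠ n' → f n ⊓ f n' = ⊥ := by
        intro n n' hnn'
        have hne2 : (n : ℕ) ≠ (n' : ℕ) := fun h => hnn' (Subtype.ext h)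
        apply le_bot_iff.mp
        exact le_trans (inf_le_inf inf_le_right inf_le_right) (le_of_eq (hcdisj _ _ hne2))
      have hfinj : Function.Injective f := by
        intro n n' h
        by_contra hne'
        have hbad := hfdisj n n' hne'
        rw [h, inf_idem] at hbad
        exact hfne n' hbad
      have hanti' : IsBAAntichain (Set.range f) := by
        constructor
        · rintro ⟨n, hn⟩
          exact hfne n hn
        · rintro y ⟨n, rfl⟩ z ⟨n', rfl⟩ hyz
          exact hfdisj n n' (fun h => hyz (by rw [h]))
      have hrlt := hcc _ hanti'
      rw [← heq] at hrlt
      have hrfin : (Set.range f).Finite := lt_aleph0_iff_set_finite.mp hrlt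
      haveI := hrfin.to_subtype
      have : Finite ↥N := by
        apply Finite.of_injective (fun n : N => (⟨f n, Set.mem_range_self n⟩ : ↥(Set.range f)))
        intro n n' h
        exact hfinj (congrArg Subtype.val h)
      exact hNinf (N.toFinite)
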